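/- Let 0 < α < 1, β > 0 with α + β > 1, r > 0, let F(x) = α + β/(1 + x^r) for x > 0, and let x̄ = ((α + β − 1)/(1 − α))^{1/r}, so that F(x̄) = 1. Then for all x > 0, |ln F(x)| ≤ L·|ln(x/x̄)| where L = βr/(2α + β + 2√(α² + αβ)). -/

import Mathlib

/-- Log-Lipschitz estimate for the bobwhite quail nonlinearity
`F(x) = α + β/(1 + x^r)` at its equilibrium `x̄ = ((α+β-1)/(1-α))^{1/r}`,
with constant `L = βr/(2α + β + 2√(α² + αβ))`. -/
theorem stmt_8 (α β r : ℝ) (hα : 0 < α) (hα1 : α < 1) (hβ : 0 < β)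
    (hαβ : 1 < α + β) (hr : 0 < r)
    (F : ℝ → ℝ) (hF : ∀ x : ℝ, 0 < x → F x = α + β / (1 + x ^ r))
    (xbar : ℝ) (hxbar : xbar = ((α + β - 1) / (1 - α)) ^ (1 / r)) :
    F xbar = 1 ∧
      ∀ x : ℝ, 0 < x →
        |Real.log (F x)| ≤
          (β * r / (2 * α + β + 2 * Real.sqrt (α ^ 2 + α * β))) *
            |Real.log (x / xbar)| := by
  have h1α : 0 < 1 - α := by linarith
  set c : ℝ := (α + β - 1) / (1 - α) with hc
  have hcpos : 0 < c := div_pos (by linarith) h1α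
  have hxbarpos : 0 < xbar := by rw [hxbar]; positivity
  have hxr : xbar ^ r = c := by
    rw [hxbar, ← Real.rpow_mul hcpos.le, one_div_mul_cancel hr.ne', Real.rpow_one]
  have h1c : (1:ℝ) + c = β / (1 - α) := by
    rw [hc]; field_simp; ring
  have hFx1 : F xbar = 1 := by
    rw [hF xbar hxbarpos, hxr, h1c]
    field_simp; ring
  refine ⟨hFx1, ?_⟩
  set D : ℝ := 2 * α + β + 2 * Real.sqrt (α ^ 2 + α * β) with hD
  have hDpos : 0 < D := by positivity
  set g : ℝ → ℝ := fun t => Real.log (α + β / (1 + Real.exp (r * t))) with hg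
  set d : ℝ → ℝ := fun t =>
    ((0 * (1 + Real.exp (r * t)) - β * (Real.exp (r * t) * r)) /
      (1 + Real.exp (r * t)) ^ 2) / (α + β / (1 + Real.exp (r * t))) with hd
  have hupos : ∀ t : ℝ, 0 < Real.exp (r * t) := fun t => Real.exp_pos _
  have hdenpos : ∀ t : ℝ, 0 < 1 + Real.exp (r * t) := fun t => by positivity
  have hinpos : ∀ t : ℝ, 0 < α + β / (1 + Real.exp (r * t)) := fun t => by
    have := hdenpos t; positivity
  have hderiv : ∀ t : ℝ, HasDerivAt g (d t) t := by
    intro t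
    have hlin : HasDerivAt (fun t : ℝ => r * t) r t := by
      simpa using (hasDerivAt_id t).const_mul r
    have hexp : HasDerivAt (fun t : ℝ => Real.exp (r * t)) (Real.exp (r * t) * r) t :=
      (Real.hasDerivAt_exp (r * t)).comp t hlin
    have hden : HasDerivAt (fun t : ℝ => 1 + Real.exp (r * t)) (Real.exp (r * t) * r) t :=
      hexp.const_add 1
    have hdiv : HasDerivAt (fun t : ℝ => β / (1 + Real.exp (r * t)))
        ((0 * (1 + Real.exp (r * t)) - β * (Real.exp (r * t) * r)) /
          (1 + Real.exp (r * t)) ^ 2) t :=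
      (hasDerivAt_const t β).div hden (hdenpos t).ne'
    have hin : HasDerivAt (fun t : ℝ => α + β / (1 + Real.exp (r * t)))
        ((0 * (1 + Real.exp (r * t)) - β * (Real.exp (r * t) * r)) /
          (1 + Real.exp (r * t)) ^ 2) t := hdiv.const_add α
    exact hin.log (hinpos t).ne'
  have hsq : Real.sqrt (α ^ 2 + α * β) = Real.sqrt α * Real.sqrt (α + β) := by
    rw [show α ^ 2 + α * β = α * (α + β) by ring, Real.sqrt_mul hα.le]
  have hbound : ∀ t : ℝ, ‖d t‖ ≤ β * r / D := by
    intro t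
    set u : ℝ := Real.exp (r * t) with hu
    have hu0 : 0 < u := hupos t
    have h1u : 0 < 1 + u := hdenpos t
    have hdval : d t = -(β * u * r / ((1 + u) * (α * (1 + u) + β))) := by
      rw [hd]
      have h2 : 0 < α * (1 + u) + β := by positivity
      field_simp
      ring
    have key : u * D ≤ (1 + u) * (α * (1 + u) + β) := by
      have ha2 : Real.sqrt α ^ 2 = α := Real.sq_sqrt hα.le
      have hb2 : Real.sqrt (α + β) ^ 2 = α + β := Real.sq_sqrt (by linarith)
      have h := sq_nonneg (Real.sqrt α * u - Real.sqrt (α + β))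
      have e : (Real.sqrt α * u - Real.sqrt (α + β)) ^ 2 =
          α * u ^ 2 - 2 * (Real.sqrt α * Real.sqrt (α + β)) * u + (α + β) := by
        rw [sub_sq, mul_pow, ha2, hb2]; ring
      rw [e] at h
      rw [hD, hsq]
      nlinarith [h]
    rw [hdval, Real.norm_eq_abs, abs_neg,
      abs_of_nonneg (by positivity : (0:ℝ) ≤ β * u * r / ((1 + u) * (α * (1 + u) + β)))]
    rw [div_le_div_iff₀ (by positivity) hDpos]
    nlinarith [mul_le_mul_of_nonneg_left key (by positivity : (0:ℝ) ≤ β * r)]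
  have hmvt : ∀ a b : ℝ, ‖g b - g a‖ ≤ (β * r / D) * ‖b - a‖ := by
    intro a b
    exact convex_univ.norm_image_sub_le_of_norm_hasDerivWithin_le
      (fun t _ => (hderiv t).hasDerivWithinAt) (fun t _ => hbound t)
      (Set.mem_univ a) (Set.mem_univ b)
  intro x hx
  have hgx : g (Real.log x) = Real.log (F x) := by
    rw [hg, hF x hx, Real.rpow_def_of_pos hx, mul_comm]
  have hgxbar : g (Real.log xbar) = 0 := by
    have : g (Real.log xbar) = Real.log (F xbar) := by
      rw [hg, hF xbar hxbarpos, Real.rpow_def_of_pos hxbarpos, mul_comm]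
    rw [this, hFx1, Real.log_one]
  have := hmvt (Real.log xbar) (Real.log x)
  rw [hgx, hgxbar, sub_zero, Real.norm_eq_abs, Real.norm_eq_abs] at this
  rwa [Real.log_div hx.ne' hxbarpos.ne']
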